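/- Let K be a field and c_1, c_2 invertible elements. The G_2-type cluster algebra with principal coefficients K[c_1^{±1}, c_2^{±1}][x_1, x_2, y_1, y_2]/⟨x_1y_1 - c_1 - x_2³, x_2y_2 - c_2x_1 - 1⟩ is isomorphic (over K[c_1^{±1}, c_2^{±1}]) to K[c_1^{±1}, c_2^{±1}][x, y, z]/⟨xyz - y - c_1 - x³⟩. -/

import Mathlib

open MvPolynomial in
/-- The G₂-type cluster algebra with principal coefficients
`A[x₁,x₂,y₁,y₂]/⟨x₁y₁ - c₁ - x₂³, x₂y₂ - c₂x₁ - 1⟩` is isomorphic over the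
coefficient ring `A` to `A[x,y,z]/⟨xyz - y - c₁ - x³⟩`. -/
theorem typeG2_hypersurface_presentation {K A : Type*} [Field K] [CommRing A]
    [Algebra K A] (c₁ c₂ : A) (h₁ : IsUnit c₁) (h₂ : IsUnit c₂) :
    Nonempty
      ((MvPolynomial (Fin 4) A ⧸ Ideal.span
          ({X 0 * X 2 - C c₁ - (X 1) ^ 3, X 1 * X 3 - C c₂ * X 0 - 1} :
            Set (MvPolynomial (Fin 4) A))) ≃ₐ[A]
        (MvPolynomial (Fin 3) A ⧸ Ideal.span
          ({X 0 * X 1 * X 2 - X 1 - C c₁ - (X 0) ^ 3} :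
            Set (MvPolynomial (Fin 3) A)))) := by
  obtain ⟨u, hu⟩ := h₂
  set d : A := ((u⁻¹ : Aˣ) : A) with hdd
  have hdc : d * c₂ = 1 := by rw [hdd, ← hu]; exact u.inv_mul
  set I : Ideal (MvPolynomial (Fin 4) A) :=
    Ideal.span ({X 0 * X 2 - C c₁ - (X 1) ^ 3, X 1 * X 3 - C c₂ * X 0 - 1} :
      Set (MvPolynomial (Fin 4) A)) with hI
  set J : Ideal (MvPolynomial (Fin 3) A) :=
    Ideal.span ({X 0 * X 1 * X 2 - X 1 - C c₁ - (X 0) ^ 3} :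
      Set (MvPolynomial (Fin 3) A)) with hJ
  have hC3 : (C d : MvPolynomial (Fin 3) A) * C c₂ = 1 := by
    rw [← C_mul, hdc, C_1]
  have hC4 : (C d : MvPolynomial (Fin 4) A) * C c₂ = 1 := by
    rw [← C_mul, hdc, C_1]
  set f : MvPolynomial (Fin 4) A →ₐ[A] MvPolynomial (Fin 3) A :=
    aeval ![C d * (X 0 * X 2 - 1), X 0, C c₂ * X 1, X 2] with hf
  set g : MvPolynomial (Fin 3) A →ₐ[A] MvPolynomial (Fin 4) A :=
    aeval ![X 1, C d * X 2, X 3] with hg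
  have hf0 : f (X 0) = C d * (X 0 * X 2 - 1) := by simp [hf]
  have hf1 : f (X 1) = X 0 := by simp [hf]
  have hf2 : f (X 2) = C c₂ * X 1 := by simp [hf]
  have hf3 : f (X 3) = X 2 := by simp [hf]
  have hg0 : g (X 0) = X 1 := by simp [hg]
  have hg1 : g (X 1) = C d * X 2 := by simp [hg]
  have hg2 : g (X 2) = X 3 := by simp [hg]
  have hfC : ∀ a : A, f (C a) = C a := fun a => by simp [hf]
  have hgC : ∀ a : A, g (C a) = C a := fun a => by simp [hg]
  have hfI : ∀ a ∈ I, (Ideal.Quotient.mkₐ A J).comp f a = 0 := by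
    intro a ha
    rw [AlgHom.comp_apply, Ideal.Quotient.mkₐ_eq_mk, Ideal.Quotient.eq_zero_iff_mem]
    have : I ≤ J.comap (f : MvPolynomial (Fin 4) A →+* MvPolynomial (Fin 3) A) := by
      rw [hI, Ideal.span_le]
      rintro p hp
      simp only [Set.mem_insert_iff, Set.mem_singleton_iff] at hp
      rcases hp with rfl | rfl
      · have : f (X 0 * X 2 - C c₁ - X 1 ^ 3)
            = X 0 * X 1 * X 2 - X 1 - C c₁ - X 0 ^ 3 := by
          rw [map_sub, map_sub, map_mul, map_pow, hf0, hf1, hf2, hfC]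
          linear_combination ((X 0 * X 2 - 1) * X 1) * hC3
        simp only [SetLike.mem_coe, Ideal.mem_comap, RingHom.coe_coe, this, hJ]
        exact Ideal.subset_span (Set.mem_singleton _)
      · have : f (X 1 * X 3 - C c₂ * X 0 - 1) = 0 := by
          rw [map_sub, map_sub, map_mul, map_mul, map_one, hf0, hf1, hf3, hfC]
          linear_combination (-(X 0 * X 2) + 1) * hC3
        simp only [SetLike.mem_coe, Ideal.mem_comap, RingHom.coe_coe, this]
        exact J.zero_mem
    exact this ha
  have hgJ : ∀ a ∈ J, (Ideal.Quotient.mkₐ A I).comp g a = 0 := by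
    intro a ha
    rw [AlgHom.comp_apply, Ideal.Quotient.mkₐ_eq_mk, Ideal.Quotient.eq_zero_iff_mem]
    have : J ≤ I.comap (g : MvPolynomial (Fin 3) A →+* MvPolynomial (Fin 4) A) := by
      rw [hJ, Ideal.span_le]
      rintro p hp
      simp only [Set.mem_singleton_iff] at hp
      subst hp
      have heq : g (X 0 * X 1 * X 2 - X 1 - C c₁ - X 0 ^ 3)
          = (C d * X 2) * (X 1 * X 3 - C c₂ * X 0 - 1)
            + (X 0 * X 2 - C c₁ - X 1 ^ 3) := by
        rw [map_sub, map_sub, map_sub, map_mul, map_mul, map_pow, hg0, hg1, hg2, hgC]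
        linear_combination (X 0 * X 2) * hC4
      simp only [SetLike.mem_coe, Ideal.mem_comap, RingHom.coe_coe, heq, hI]
      exact Ideal.add_mem _
        (Ideal.mul_mem_left _ _ (Ideal.subset_span (Set.mem_insert_of_mem _ rfl)))
        (Ideal.subset_span (Set.mem_insert _ _))
    exact this ha
  set F := Ideal.Quotient.liftₐ I ((Ideal.Quotient.mkₐ A J).comp f) hfI with hF
  set G := Ideal.Quotient.liftₐ J ((Ideal.Quotient.mkₐ A I).comp g) hgJ with hG
  have hFmk : ∀ p, F (Ideal.Quotient.mk I p) = Ideal.Quotient.mk J (f p) := fun p => by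
    rw [hF, Ideal.Quotient.liftₐ_apply]; rfl
  have hGmk : ∀ p, G (Ideal.Quotient.mk J p) = Ideal.Quotient.mk I (g p) := fun p => by
    rw [hG, Ideal.Quotient.liftₐ_apply]; rfl
  have k0 : f (g (X 0)) = X 0 := by rw [hg0, hf1]
  have k1 : f (g (X 1)) = X 1 := by
    rw [hg1, map_mul, hfC, hf2]
    linear_combination (X 1 : MvPolynomial (Fin 3) A) * hC3
  have k2 : f (g (X 2)) = X 2 := by rw [hg2, hf3]
  have hgf0 : g (f (X 0)) = C d * (X 1 * X 3 - 1) := by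
    simp only [hf0, map_mul, map_sub, map_one, hgC, hg0, hg2]
  have m0 : Ideal.Quotient.mk I (g (f (X 0))) = Ideal.Quotient.mk I (X 0) := by
    rw [hgf0, Ideal.Quotient.eq]
    have heq : (C d : MvPolynomial (Fin 4) A) * (X 1 * X 3 - 1) - X 0
        = C d * (X 1 * X 3 - C c₂ * X 0 - 1) := by
      linear_combination ((X 0) : MvPolynomial (Fin 4) A) * hC4
    rw [heq]
    exact Ideal.mul_mem_left _ _ (Ideal.subset_span (Set.mem_insert_of_mem _ rfl))
  have m1 : g (f (X 1)) = X 1 := by rw [hf1, hg0]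
  have m2 : g (f (X 2)) = X 2 := by
    rw [hf2, map_mul, hgC, hg1]
    linear_combination (X 2 : MvPolynomial (Fin 4) A) * hC4
  have m3 : g (f (X 3)) = X 3 := by rw [hf3, hg2]
  refine ⟨AlgEquiv.ofAlgHom F G ?_ ?_⟩
  · refine Ideal.Quotient.algHom_ext A (MvPolynomial.algHom_ext fun i => ?_)
    fin_cases i <;>
      simp only [Fin.zero_eta, Fin.mk_one, Fin.reduceFinMk, AlgHom.comp_apply,
        Ideal.Quotient.mkₐ_eq_mk, AlgHom.id_apply, hGmk, hFmk, k0, k1, k2]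
  · refine Ideal.Quotient.algHom_ext A (MvPolynomial.algHom_ext fun i => ?_)
    fin_cases i <;>
      simp only [Fin.zero_eta, Fin.mk_one, Fin.reduceFinMk, AlgHom.comp_apply,
        Ideal.Quotient.mkₐ_eq_mk, AlgHom.id_apply, hFmk, hGmk, m0, m1, m2, m3]
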